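/- Fix γ ∈ (0,2) with γ² irrational, a real P ≠ 0, and an integer n ≥ 1; set Q := γ/2 + 2/γ. For χ ∈ {γ/2, 2/γ} and α ∈ ℂ let l := χ²/2 − αχ/2 and Y_n(χ,α) := [Γ(1/2 − l/2 + (iχ/2)√(P²+2n))·Γ(1/2 − l/2 − (iχ/2)√(P²+2n))·Γ(1 + l/2 + iχP/2)·Γ(1 + l/2 − iχP/2)] / [Γ(1 + l/2 + (iχ/2)√(P²+2n))·Γ(1 + l/2 − (iχ/2)√(P²+2n))·Γ(1/2 − l/2 + iχP/2)·Γ(1/2 − l/2 − iχP/2)], where Γ is the complex Gamma function; for real α all Gamma arguments have nonzero imaginary part, so Y_n(χ,α) is finite and nonzero for α ∈ ℝ. Let V ⊆ ℂ be a connected open set containing the real interval (−4/γ, 2Q), let Z : {γ/2, 2/γ} × ℝ → ℂ be an arbitrary function, and let X¹, X² be meromorphic functions on V. Assume that for each i ∈ {1,2}, each χ ∈ {γ/2, 2/γ}, and every α ∈ (−4/γ + χ, 2Q − χ) such that Xⁱ is analytic at both α − χ and α + χ, one has Xⁱ(α − χ) = Y_n(χ,α)·Xⁱ(α + χ) + Z(χ,α).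 If there exists α₀ ∈ (−2/γ, γ + 2/γ) at which X¹ and X² are both analytic and X¹(α₀) = X²(α₀), then X¹(α) = X²(α) for every α ∈ V at which both X¹ and X² are analytic. -/

import Mathlib

open Real Complex Set Filter Topology

/-- The coefficient `Y_n(χ,α)` of the homogeneous part of the shift equations. -/
noncomputable def Yshift (P : ℝ) (n : ℕ) (χ α : ℝ) : ℂ :=
  (Complex.Gamma (1 / 2 - ((χ : ℂ) ^ 2 / 2 - (α : ℂ) * (χ : ℂ) / 2) / 2 +
      Complex.I * (χ : ℂ) / 2 * (Real.sqrt (P ^ 2 + 2 * n) : ℂ)) *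
    Complex.Gamma (1 / 2 - ((χ : ℂ) ^ 2 / 2 - (α : ℂ) * (χ : ℂ) / 2) / 2 -
      Complex.I * (χ : ℂ) / 2 * (Real.sqrt (P ^ 2 + 2 * n) : ℂ)) *
    Complex.Gamma (1 + ((χ : ℂ) ^ 2 / 2 - (α : ℂ) * (χ : ℂ) / 2) / 2 +
      Complex.I * (χ : ℂ) * (P : ℂ) / 2) *
    Complex.Gamma (1 + ((χ : ℂ) ^ 2 / 2 - (α : ℂ) * (χ : ℂ) / 2) / 2 -
      Complex.I * (χ : ℂ) * (P : ℂ) / 2)) /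
  (Complex.Gamma (1 + ((χ : ℂ) ^ 2 / 2 - (α : ℂ) * (χ : ℂ) / 2) / 2 +
      Complex.I * (χ : ℂ) / 2 * (Real.sqrt (P ^ 2 + 2 * n) : ℂ)) *
    Complex.Gamma (1 + ((χ : ℂ) ^ 2 / 2 - (α : ℂ) * (χ : ℂ) / 2) / 2 -
      Complex.I * (χ : ℂ) / 2 * (Real.sqrt (P ^ 2 + 2 * n) : ℂ)) *
    Complex.Gamma (1 / 2 - ((χ : ℂ) ^ 2 / 2 - (α : ℂ) * (χ : ℂ) / 2) / 2 +
      Complex.I * (χ : ℂ) * (P : ℂ) / 2) *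
    Complex.Gamma (1 / 2 - ((χ : ℂ) ^ 2 / 2 - (α : ℂ) * (χ : ℂ) / 2) / 2 -
      Complex.I * (χ : ℂ) * (P : ℂ) / 2))



open Real Complex Set Filter Topology

/-- A meromorphic function that vanishes frequently near a point vanishes eventually
on a punctured neighbourhood. -/
lemma mero_freq_zero {f : ℂ → ℂ} {x : ℂ} (hf : MeromorphicAt f x)
    (h : ∃ᶠ z in 𝓝[≠] x, f z = 0) : ∀ᶠ z in 𝓝[≠] x, f z = 0 := by
  obtain ⟨m, hm⟩ := hf
  have h2 : ∃ᶠ z in 𝓝[≠] x, (fun z => (z - x) ^ m • f z) z = 0 :=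
    h.mono fun z hz => by simp [hz]
  have h3 := hm.frequently_zero_iff_eventually_zero.1 h2
  have h4 : ∀ᶠ z in 𝓝[≠] x, (z - x) ^ m • f z = 0 := h3.filter_mono nhdsWithin_le_nhds
  filter_upwards [h4, self_mem_nhdsWithin] with z h1 h2'
  have hz : z ≠ x := h2'
  have hpow : (z - x) ^ m ≠ 0 := pow_ne_zero _ (sub_ne_zero_of_ne hz)
  simpa [smul_eq_zero, hpow] using h1

lemma mero_comp_add {f : ℂ → ℂ} {x c : ℂ} (hf : MeromorphicAt f (x + c)) :
    MeromorphicAt (fun w => f (w + c)) x := by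
  obtain ⟨m, hm⟩ := hf
  refine ⟨m, ?_⟩
  have ha : AnalyticAt ℂ (fun w : ℂ => w + c) x := analyticAt_id.add analyticAt_const
  have h2 : AnalyticAt ℂ ((fun z => (z - (x + c)) ^ m • f z) ∘ (fun w : ℂ => w + c)) x :=
    AnalyticAt.comp (f := fun w : ℂ => w + c) hm ha
  simpa only [Function.comp_def, add_sub_add_right_eq_sub] using h2

lemma mero_comp_sub {f : ℂ → ℂ} {x c : ℂ} (hf : MeromorphicAt f (x - c)) :
    MeromorphicAt (fun w => f (w - c)) x := by
  obtain ⟨m, hm⟩ := hf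
  refine ⟨m, ?_⟩
  have ha : AnalyticAt ℂ (fun w : ℂ => w - c) x := analyticAt_id.sub analyticAt_const
  have h2 : AnalyticAt ℂ ((fun z => (z - (x - c)) ^ m • f z) ∘ (fun w : ℂ => w - c)) x :=
    AnalyticAt.comp (f := fun w : ℂ => w - c) hm ha
  simpa only [Function.comp_def, sub_sub_sub_cancel_right] using h2

lemma tendsto_punctured_add (c x : ℂ) :
    Tendsto (fun w : ℂ => w + c) (𝓝[≠] x) (𝓝[≠] (x + c)) := by
  refine tendsto_nhdsWithin_of_tendsto_nhds_of_eventually_within _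
    (((continuous_add_right c).tendsto x).mono_left nhdsWithin_le_nhds) ?_
  filter_upwards [self_mem_nhdsWithin] with w hw
  have hw' : w ≠ x := hw
  simp only [Set.mem_compl_iff, Set.mem_singleton_iff]
  exact fun h => hw' (add_right_cancel h)

lemma tendsto_punctured_sub (c x : ℂ) :
    Tendsto (fun w : ℂ => w - c) (𝓝[≠] x) (𝓝[≠] (x - c)) := by
  refine tendsto_nhdsWithin_of_tendsto_nhds_of_eventually_within _
    (((continuous_sub_right c).tendsto x).mono_left nhdsWithin_le_nhds) ?_
  filter_upwards [self_mem_nhdsWithin] with w hw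
  have hw' : w ≠ x := hw
  simp only [Set.mem_compl_iff, Set.mem_singleton_iff]
  exact fun h => hw' (by linear_combination h)

lemma analyticAt_Gamma_of_im_ne_zero {z : ℂ} (hz : z.im ≠ 0) :
    AnalyticAt ℂ Complex.Gamma z := by
  have hopen : IsOpen {w : ℂ | w.im ≠ 0} := IsOpen.preimage Complex.continuous_im isOpen_ne
  apply DifferentiableOn.analyticAt (s := {w : ℂ | w.im ≠ 0})
  · intro w hw
    refine (Complex.differentiableAt_Gamma w fun m hm => ?_).differentiableWithinAt
    apply hw
    rw [hm]
    simp
  · exact hopen.mem_nhds hz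

lemma analyticAt_Gamma_affine {p q c : ℝ} (hc : c ≠ 0) (α : ℝ) :
    AnalyticAt ℂ (fun w : ℂ => Complex.Gamma ((p : ℂ) + (q : ℂ) * w + Complex.I * (c : ℂ)))
      (α : ℂ) ∧
    Complex.Gamma ((p : ℂ) + (q : ℂ) * (α : ℂ) + Complex.I * (c : ℂ)) ≠ 0 := by
  have him : ((p : ℂ) + (q : ℂ) * (α : ℂ) + Complex.I * (c : ℂ)).im ≠ 0 := by
    simp [Complex.add_im, Complex.mul_im, hc]
  constructor
  · have haff : AnalyticAt ℂ (fun w : ℂ => (p : ℂ) + (q : ℂ) * w + Complex.I * (c : ℂ))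
        (α : ℂ) := by
      exact ((analyticAt_const.add (analyticAt_const.mul analyticAt_id)).add analyticAt_const)
    exact AnalyticAt.comp (f := fun w : ℂ => (p : ℂ) + (q : ℂ) * w + Complex.I * (c : ℂ))
      (analyticAt_Gamma_of_im_ne_zero him) haff
  · exact Complex.Gamma_ne_zero fun m hm => him (by rw [hm]; simp)

lemma isOpen_eventually_punctured (p : ℂ → Prop) :
    IsOpen {z : ℂ | ∀ᶠ w in 𝓝[≠] z, p w} := by
  rw [isOpen_iff_mem_nhds]
  intro z hz
  have hz' : ∀ᶠ w in 𝓝[≠] z, p w := hz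
  rw [eventually_nhdsWithin_iff] at hz'
  obtain ⟨t, htp, hto, htz⟩ := eventually_nhds_iff.mp hz'
  refine Filter.mem_of_superset (hto.mem_nhds htz) ?_
  intro w hw
  show ∀ᶠ v in 𝓝[≠] w, p v
  by_cases hwz : w = z
  · subst hwz; exact hz
  · have h1 : ∀ᶠ v in 𝓝 w, v ∈ t := hto.mem_nhds hw
    have h2 : ∀ᶠ v in 𝓝 w, v ≠ z := eventually_ne_nhds hwz
    exact ((h1.and h2).mono fun v ⟨hv1, hv2⟩ => htp v hv1 hv2).filter_mono nhdsWithin_le_nhds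

/-- Complex extension of `Yshift` in the `α`-variable. -/
noncomputable def Ycl (P : ℝ) (n : ℕ) (χ : ℝ) (w : ℂ) : ℂ :=
  (Complex.Gamma (1 / 2 - ((χ : ℂ) ^ 2 / 2 - w * (χ : ℂ) / 2) / 2 +
      Complex.I * (χ : ℂ) / 2 * (Real.sqrt (P ^ 2 + 2 * n) : ℂ)) *
    Complex.Gamma (1 / 2 - ((χ : ℂ) ^ 2 / 2 - w * (χ : ℂ) / 2) / 2 -
      Complex.I * (χ : ℂ) / 2 * (Real.sqrt (P ^ 2 + 2 * n) : ℂ)) *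
    Complex.Gamma (1 + ((χ : ℂ) ^ 2 / 2 - w * (χ : ℂ) / 2) / 2 +
      Complex.I * (χ : ℂ) * (P : ℂ) / 2) *
    Complex.Gamma (1 + ((χ : ℂ) ^ 2 / 2 - w * (χ : ℂ) / 2) / 2 -
      Complex.I * (χ : ℂ) * (P : ℂ) / 2)) /
  (Complex.Gamma (1 + ((χ : ℂ) ^ 2 / 2 - w * (χ : ℂ) / 2) / 2 +
      Complex.I * (χ : ℂ) / 2 * (Real.sqrt (P ^ 2 + 2 * n) : ℂ)) *
    Complex.Gamma (1 + ((χ : ℂ) ^ 2 / 2 - w * (χ : ℂ) / 2) / 2 -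
      Complex.I * (χ : ℂ) / 2 * (Real.sqrt (P ^ 2 + 2 * n) : ℂ)) *
    Complex.Gamma (1 / 2 - ((χ : ℂ) ^ 2 / 2 - w * (χ : ℂ) / 2) / 2 +
      Complex.I * (χ : ℂ) * (P : ℂ) / 2) *
    Complex.Gamma (1 / 2 - ((χ : ℂ) ^ 2 / 2 - w * (χ : ℂ) / 2) / 2 -
      Complex.I * (χ : ℂ) * (P : ℂ) / 2))


lemma yshift_eq_ycl (P : ℝ) (n : ℕ) (χ t : ℝ) : Yshift P n χ t = Ycl P n χ (t : ℂ) := rfl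

lemma ycl_good {P : ℝ} (hP : P ≠ 0) (n : ℕ) {χ : ℝ} (hχ : 0 < χ) (α : ℝ) :
    AnalyticAt ℂ (Ycl P n χ) (α : ℂ) ∧ Ycl P n χ (α : ℂ) ≠ 0 := by
  have hs0 : 0 < Real.sqrt (P ^ 2 + 2 * n) := Real.sqrt_pos.2 (by positivity)
  have hc1 : χ * Real.sqrt (P ^ 2 + 2 * n) / 2 ≠ 0 := by positivity
  have hc2 : -(χ * Real.sqrt (P ^ 2 + 2 * n) / 2) ≠ 0 := neg_ne_zero.2 hc1
  have hc3 : χ * P / 2 ≠ 0 := div_ne_zero (mul_ne_zero hχ.ne' hP) two_ne_zero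
  have hc4 : -(χ * P / 2) ≠ 0 := neg_ne_zero.2 hc3
  obtain ⟨a1, z1⟩ := analyticAt_Gamma_affine (p := 1/2 - χ^2/4) (q := χ/4) hc1 α
  obtain ⟨a2, z2⟩ := analyticAt_Gamma_affine (p := 1/2 - χ^2/4) (q := χ/4) hc2 α
  obtain ⟨a3, z3⟩ := analyticAt_Gamma_affine (p := 1 + χ^2/4) (q := -(χ/4)) hc3 α
  obtain ⟨a4, z4⟩ := analyticAt_Gamma_affine (p := 1 + χ^2/4) (q := -(χ/4)) hc4 α
  obtain ⟨a5, z5⟩ := analyticAt_Gamma_affine (p := 1 + χ^2/4) (q := -(χ/4)) hc1 α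
  obtain ⟨a6, z6⟩ := analyticAt_Gamma_affine (p := 1 + χ^2/4) (q := -(χ/4)) hc2 α
  obtain ⟨a7, z7⟩ := analyticAt_Gamma_affine (p := 1/2 - χ^2/4) (q := χ/4) hc3 α
  obtain ⟨a8, z8⟩ := analyticAt_Gamma_affine (p := 1/2 - χ^2/4) (q := χ/4) hc4 α
  have e1 : ∀ w : ℂ, 1 / 2 - ((χ : ℂ) ^ 2 / 2 - w * (χ : ℂ) / 2) / 2 +
      Complex.I * (χ : ℂ) / 2 * (Real.sqrt (P ^ 2 + 2 * n) : ℂ) =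
      ((1/2 - χ^2/4 : ℝ) : ℂ) + ((χ/4 : ℝ) : ℂ) * w +
        Complex.I * ((χ * Real.sqrt (P ^ 2 + 2 * n) / 2 : ℝ) : ℂ) := fun w => by
    push_cast; ring
  have e2 : ∀ w : ℂ, 1 / 2 - ((χ : ℂ) ^ 2 / 2 - w * (χ : ℂ) / 2) / 2 -
      Complex.I * (χ : ℂ) / 2 * (Real.sqrt (P ^ 2 + 2 * n) : ℂ) =
      ((1/2 - χ^2/4 : ℝ) : ℂ) + ((χ/4 : ℝ) : ℂ) * w +
        Complex.I * ((-(χ * Real.sqrt (P ^ 2 + 2 * n) / 2) : ℝ) : ℂ) := fun w => by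
    push_cast; ring
  have e3 : ∀ w : ℂ, 1 + ((χ : ℂ) ^ 2 / 2 - w * (χ : ℂ) / 2) / 2 +
      Complex.I * (χ : ℂ) * (P : ℂ) / 2 =
      ((1 + χ^2/4 : ℝ) : ℂ) + ((-(χ/4) : ℝ) : ℂ) * w +
        Complex.I * ((χ * P / 2 : ℝ) : ℂ) := fun w => by
    push_cast; ring
  have e4 : ∀ w : ℂ, 1 + ((χ : ℂ) ^ 2 / 2 - w * (χ : ℂ) / 2) / 2 -
      Complex.I * (χ : ℂ) * (P : ℂ) / 2 =
      ((1 + χ^2/4 : ℝ) : ℂ) + ((-(χ/4) : ℝ) : ℂ) * w +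
        Complex.I * ((-(χ * P / 2) : ℝ) : ℂ) := fun w => by
    push_cast; ring
  have e5 : ∀ w : ℂ, 1 + ((χ : ℂ) ^ 2 / 2 - w * (χ : ℂ) / 2) / 2 +
      Complex.I * (χ : ℂ) / 2 * (Real.sqrt (P ^ 2 + 2 * n) : ℂ) =
      ((1 + χ^2/4 : ℝ) : ℂ) + ((-(χ/4) : ℝ) : ℂ) * w +
        Complex.I * ((χ * Real.sqrt (P ^ 2 + 2 * n) / 2 : ℝ) : ℂ) := fun w => by
    push_cast; ring
  have e6 : ∀ w : ℂ, 1 + ((χ : ℂ) ^ 2 / 2 - w * (χ : ℂ) / 2) / 2 -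
      Complex.I * (χ : ℂ) / 2 * (Real.sqrt (P ^ 2 + 2 * n) : ℂ) =
      ((1 + χ^2/4 : ℝ) : ℂ) + ((-(χ/4) : ℝ) : ℂ) * w +
        Complex.I * ((-(χ * Real.sqrt (P ^ 2 + 2 * n) / 2) : ℝ) : ℂ) := fun w => by
    push_cast; ring
  have e7 : ∀ w : ℂ, 1 / 2 - ((χ : ℂ) ^ 2 / 2 - w * (χ : ℂ) / 2) / 2 +
      Complex.I * (χ : ℂ) * (P : ℂ) / 2 =
      ((1/2 - χ^2/4 : ℝ) : ℂ) + ((χ/4 : ℝ) : ℂ) * w +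
        Complex.I * ((χ * P / 2 : ℝ) : ℂ) := fun w => by
    push_cast; ring
  have e8 : ∀ w : ℂ, 1 / 2 - ((χ : ℂ) ^ 2 / 2 - w * (χ : ℂ) / 2) / 2 -
      Complex.I * (χ : ℂ) * (P : ℂ) / 2 =
      ((1/2 - χ^2/4 : ℝ) : ℂ) + ((χ/4 : ℝ) : ℂ) * w +
        Complex.I * ((-(χ * P / 2) : ℝ) : ℂ) := fun w => by
    push_cast; ring
  have eY : Ycl P n χ = fun w : ℂ =>
      (Complex.Gamma (((1/2 - χ^2/4 : ℝ) : ℂ) + ((χ/4 : ℝ) : ℂ) * w +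
          Complex.I * ((χ * Real.sqrt (P ^ 2 + 2 * n) / 2 : ℝ) : ℂ)) *
        Complex.Gamma (((1/2 - χ^2/4 : ℝ) : ℂ) + ((χ/4 : ℝ) : ℂ) * w +
          Complex.I * ((-(χ * Real.sqrt (P ^ 2 + 2 * n) / 2) : ℝ) : ℂ)) *
        Complex.Gamma (((1 + χ^2/4 : ℝ) : ℂ) + ((-(χ/4) : ℝ) : ℂ) * w +
          Complex.I * ((χ * P / 2 : ℝ) : ℂ)) *
        Complex.Gamma (((1 + χ^2/4 : ℝ) : ℂ) + ((-(χ/4) : ℝ) : ℂ) * w +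
          Complex.I * ((-(χ * P / 2) : ℝ) : ℂ))) /
      (Complex.Gamma (((1 + χ^2/4 : ℝ) : ℂ) + ((-(χ/4) : ℝ) : ℂ) * w +
          Complex.I * ((χ * Real.sqrt (P ^ 2 + 2 * n) / 2 : ℝ) : ℂ)) *
        Complex.Gamma (((1 + χ^2/4 : ℝ) : ℂ) + ((-(χ/4) : ℝ) : ℂ) * w +
          Complex.I * ((-(χ * Real.sqrt (P ^ 2 + 2 * n) / 2) : ℝ) : ℂ)) *
        Complex.Gamma (((1/2 - χ^2/4 : ℝ) : ℂ) + ((χ/4 : ℝ) : ℂ) * w +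
          Complex.I * ((χ * P / 2 : ℝ) : ℂ)) *
        Complex.Gamma (((1/2 - χ^2/4 : ℝ) : ℂ) + ((χ/4 : ℝ) : ℂ) * w +
          Complex.I * ((-(χ * P / 2) : ℝ) : ℂ))) := by
    funext w
    rw [Ycl, e1 w, e2 w, e3 w, e4 w, e5 w, e6 w, e7 w, e8 w]
  constructor
  · rw [eY]
    exact (((a1.mul a2).mul a3).mul a4).div (((a5.mul a6).mul a7).mul a8)
      (mul_ne_zero (mul_ne_zero (mul_ne_zero z5 z6) z7) z8)
  · rw [eY]
    exact div_ne_zero (mul_ne_zero (mul_ne_zero (mul_ne_zero z1 z2) z3) z4)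
      (mul_ne_zero (mul_ne_zero (mul_ne_zero z5 z6) z7) z8)

lemma down_lemma {a b : ℝ} (ha : 0 < a) (hb : 0 < b) (P : ℝ → Prop)
    (hstep : ∀ u : ℝ, -b < u → u < b → (P u ↔ P (u + a))) :
    ∀ k : ℕ, ∀ v : ℝ, 0 ≤ v → v < a + b → v < (k + 1) * a → P v →
      ∃ j : ℕ, 0 ≤ v - j * a ∧ v - j * a < a ∧ P (v - j * a) := by
  intro k
  induction k with
  | zero =>
    intro v h0 hab h1 hP
    exact ⟨0, by simpa using h0, by simpa using (by push_cast at h1; linarith : v < a), by simpa using hP⟩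
  | succ k ih =>
    intro v h0 hab h1 hP
    by_cases hva : v < a
    · exact ⟨0, by simpa using h0, by simpa using hva, by simpa using hP⟩
    · push_neg at hva
      have hP' : P (v - a) := by
        have hs := hstep (v - a) (by linarith) (by linarith)
        rw [show v - a + a = v from by ring] at hs
        exact hs.2 hP
      obtain ⟨j, hj0, hj1, hjP⟩ := ih (v - a) (by linarith) (by linarith)
        (by push_cast at h1 ⊢; linarith) hP'
      refine ⟨j + 1, ?_, ?_, ?_⟩
      · rw [show v - (↑(j + 1) : ℝ) * a = v - a - (j : ℝ) * a from by push_cast; ring]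
        exact hj0
      · rw [show v - (↑(j + 1) : ℝ) * a = v - a - (j : ℝ) * a from by push_cast; ring]
        exact hj1
      · rw [show v - (↑(j + 1) : ℝ) * a = v - a - (j : ℝ) * a from by push_cast; ring]
        exact hjP

lemma up_lemma {a b : ℝ} (ha : 0 < a) (hb : 0 < b) (P : ℝ → Prop)
    (hstep : ∀ u : ℝ, -b < u → u < b → (P u ↔ P (u + a))) :
    ∀ k : ℕ, ∀ v : ℝ, -b < v → v < a → -(k : ℝ) * a ≤ v → P v →
      ∃ u : ℝ, 0 ≤ u ∧ u < a ∧ P u := by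
  intro k
  induction k with
  | zero =>
    intro v h1 h2 h3 hP
    exact ⟨v, by simpa using h3, h2, hP⟩
  | succ k ih =>
    intro v h1 h2 h3 hP
    by_cases h0 : 0 ≤ v
    · exact ⟨v, h0, h2, hP⟩
    · push_neg at h0
      have hP' : P (v + a) := (hstep v h1 (by linarith)).1 hP
      exact ih (v + a) (by linarith) (by linarith) (by push_cast at h3 ⊢; linarith) hP'

theorem step_iff {γ : ℝ} {P : ℝ} (hP : P ≠ 0) {n : ℕ}
    (V : Set ℂ)
    (hVsub : ∀ t : ℝ, -4 / γ < t → t < 2 * (γ / 2 + 2 / γ) → (t : ℂ) ∈ V)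
    (Z : ℝ → ℝ → ℂ) (X₁ X₂ : ℂ → ℂ)
    (hX₁ : MeromorphicOn X₁ V) (hX₂ : MeromorphicOn X₂ V)
    (hshift₁ : ∀ χ ∈ ({γ / 2, 2 / γ} : Set ℝ), ∀ α : ℝ,
      α ∈ Set.Ioo (-4 / γ + χ) (2 * (γ / 2 + 2 / γ) - χ) →
      AnalyticAt ℂ X₁ ((α - χ : ℝ) : ℂ) → AnalyticAt ℂ X₁ ((α + χ : ℝ) : ℂ) →
      X₁ ((α - χ : ℝ) : ℂ) = Yshift P n χ α * X₁ ((α + χ : ℝ) : ℂ) + Z χ α)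
    (hshift₂ : ∀ χ ∈ ({γ / 2, 2 / γ} : Set ℝ), ∀ α : ℝ,
      α ∈ Set.Ioo (-4 / γ + χ) (2 * (γ / 2 + 2 / γ) - χ) →
      AnalyticAt ℂ X₂ ((α - χ : ℝ) : ℂ) → AnalyticAt ℂ X₂ ((α + χ : ℝ) : ℂ) →
      X₂ ((α - χ : ℝ) : ℂ) = Yshift P n χ α * X₂ ((α + χ : ℝ) : ℂ) + Z χ α)
    {χ : ℝ} (hχmem : χ ∈ ({γ / 2, 2 / γ} : Set ℝ)) (hχ : 0 < χ)
    {α : ℝ} (hα1 : -4 / γ + χ < α) (hα2 : α < 2 * (γ / 2 + 2 / γ) - χ) :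
    (Tendsto (fun z => X₁ z - X₂ z) (𝓝[≠] ((α - χ : ℝ) : ℂ)) (𝓝 0) ↔
     Tendsto (fun z => X₁ z - X₂ z) (𝓝[≠] ((α + χ : ℝ) : ℂ)) (𝓝 0)) := by
  set D : ℂ → ℂ := fun z => X₁ z - X₂ z with hDdef
  have hVm : ((α - χ : ℝ) : ℂ) ∈ V := hVsub _ (by linarith) (by linarith)
  have hVp : ((α + χ : ℝ) : ℂ) ∈ V := hVsub _ (by linarith) (by linarith)
  obtain ⟨hYa, hY0⟩ := ycl_good hP n hχ α
  have c1 : ((α - χ : ℝ) : ℂ) = (α : ℂ) - (χ : ℂ) := by push_cast; ring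
  have c2 : ((α + χ : ℝ) : ℂ) = (α : ℂ) + (χ : ℂ) := by push_cast; ring
  -- translation maps on punctured neighbourhoods
  have tminus : Tendsto (fun w : ℂ => w - (χ : ℂ)) (𝓝[≠] (α : ℂ)) (𝓝[≠] ((α - χ : ℝ) : ℂ)) := by
    rw [c1]; exact tendsto_punctured_sub _ _
  have tplus : Tendsto (fun w : ℂ => w + (χ : ℂ)) (𝓝[≠] (α : ℂ)) (𝓝[≠] ((α + χ : ℝ) : ℂ)) := by
    rw [c2]; exact tendsto_punctured_add _ _
  -- meromorphy of the shifted difference at α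
  have hDm : MeromorphicAt D ((α - χ : ℝ) : ℂ) := (hX₁ _ hVm).sub (hX₂ _ hVm)
  have hDp : MeromorphicAt D ((α + χ : ℝ) : ℂ) := (hX₁ _ hVp).sub (hX₂ _ hVp)
  have hm_minus : MeromorphicAt (fun w => D (w - (χ : ℂ))) (α : ℂ) := by
    apply mero_comp_sub; rw [← c1]; exact hDm
  have hm_plus : MeromorphicAt (fun w => D (w + (χ : ℂ))) (α : ℂ) := by
    apply mero_comp_add; rw [← c2]; exact hDp
  have hg : MeromorphicAt (fun w => D (w - (χ : ℂ)) - Ycl P n χ w * D (w + (χ : ℂ)))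
      (α : ℂ) := hm_minus.sub (hYa.meromorphicAt.mul hm_plus)
  -- eventual analyticity of X₁, X₂ at shifted points
  have hgood : ∀ᶠ w in 𝓝[≠] (α : ℂ),
      (AnalyticAt ℂ X₁ (w - (χ : ℂ)) ∧ AnalyticAt ℂ X₂ (w - (χ : ℂ))) ∧
      (AnalyticAt ℂ X₁ (w + (χ : ℂ)) ∧ AnalyticAt ℂ X₂ (w + (χ : ℂ))) := by
    filter_upwards [tminus.eventually (hX₁ _ hVm).eventually_analyticAt,
      tminus.eventually (hX₂ _ hVm).eventually_analyticAt,
      tplus.eventually (hX₁ _ hVp).eventually_analyticAt,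
      tplus.eventually (hX₂ _ hVp).eventually_analyticAt] with w h1 h2 h3 h4
    exact ⟨⟨h1, h2⟩, h3, h4⟩
  -- a real sequence tending to α within the punctured neighbourhood
  have hrtend : Tendsto (fun k : ℕ => α + 1 / ((k : ℝ) + 1)) atTop (𝓝 α) := by
    have : Tendsto (fun k : ℕ => 1 / ((k : ℝ) + 1)) atTop (𝓝 0) :=
      tendsto_one_div_add_atTop_nhds_zero_nat
    simpa using tendsto_const_nhds.add this
  have hseq : Tendsto (fun k : ℕ => ((α + 1 / ((k : ℝ) + 1) : ℝ) : ℂ)) atTop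
      (𝓝[≠] (α : ℂ)) := by
    apply tendsto_nhdsWithin_of_tendsto_nhds_of_eventually_within
    · exact (Complex.continuous_ofReal.tendsto α).comp hrtend
    · refine Eventually.of_forall fun k => ?_
      have hk : (0 : ℝ) < 1 / ((k : ℝ) + 1) := by positivity
      simp only [Set.mem_compl_iff, Set.mem_singleton_iff]
      intro h
      rw [Complex.ofReal_inj] at h
      linarith
  -- the identity holds frequently near α
  have hfreq : ∃ᶠ w in 𝓝[≠] (α : ℂ),
      D (w - (χ : ℂ)) - Ycl P n χ w * D (w + (χ : ℂ)) = 0 := by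
    apply hseq.frequently
    apply Eventually.frequently
    have hup : ∀ᶠ k : ℕ in atTop, α + 1 / ((k : ℝ) + 1) < 2 * (γ / 2 + 2 / γ) - χ :=
      hrtend.eventually_lt_const hα2
    filter_upwards [hseq.eventually hgood, hup] with k hk hk2
    obtain ⟨⟨hA1m, hA2m⟩, hA1p, hA2p⟩ := hk
    set t : ℝ := α + 1 / ((k : ℝ) + 1) with htdef
    have ht : t ∈ Set.Ioo (-4 / γ + χ) (2 * (γ / 2 + 2 / γ) - χ) := by
      constructor
      · have : (0 : ℝ) < 1 / ((k : ℝ) + 1) := by positivity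
        rw [htdef]; linarith
      · exact hk2
    have ct1 : ((t - χ : ℝ) : ℂ) = ((t : ℝ) : ℂ) - (χ : ℂ) := by push_cast; ring
    have ct2 : ((t + χ : ℝ) : ℂ) = ((t : ℝ) : ℂ) + (χ : ℂ) := by push_cast; ring
    have e1 := hshift₁ χ hχmem t ht (by rw [ct1]; exact hA1m) (by rw [ct2]; exact hA1p)
    have e2 := hshift₂ χ hχmem t ht (by rw [ct1]; exact hA2m) (by rw [ct2]; exact hA2p)
    rw [ct1, ct2, yshift_eq_ycl] at e1 e2
    show D (((t : ℝ) : ℂ) - (χ : ℂ)) - Ycl P n χ ((t : ℝ) : ℂ) * D (((t : ℝ) : ℂ) + (χ : ℂ)) = 0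
    rw [hDdef]
    simp only []
    rw [e1, e2]
    ring
  have hevid := mero_freq_zero hg hfreq
  have hYt : Tendsto (Ycl P n χ) (𝓝[≠] (α : ℂ)) (𝓝 (Ycl P n χ (α : ℂ))) :=
    hYa.continuousAt.continuousWithinAt
  have hYne : ∀ᶠ w in 𝓝[≠] (α : ℂ), Ycl P n χ w ≠ 0 :=
    (hYa.continuousAt.eventually_ne hY0).filter_mono nhdsWithin_le_nhds
  constructor
  · intro h
    have h1 : Tendsto (fun w : ℂ => D (w - (χ : ℂ))) (𝓝[≠] (α : ℂ)) (𝓝 0) := h.comp tminus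
    have hquot : Tendsto (fun w : ℂ => D (w - (χ : ℂ)) / Ycl P n χ w) (𝓝[≠] (α : ℂ))
        (𝓝 0) := by
      have := h1.div hYt hY0
      rw [zero_div] at this
      exact this
    have h2 : Tendsto (fun w : ℂ => D (w + (χ : ℂ))) (𝓝[≠] (α : ℂ)) (𝓝 0) := by
      refine hquot.congr' ?_
      filter_upwards [hevid, hYne] with w hw hYw
      rw [sub_eq_zero] at hw
      rw [div_eq_iff hYw, hw]
      ring
    have tminus' : Tendsto (fun w : ℂ => w - (χ : ℂ)) (𝓝[≠] ((α + χ : ℝ) : ℂ))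
        (𝓝[≠] (α : ℂ)) := by
      have e : ((α + χ : ℝ) : ℂ) - (χ : ℂ) = (α : ℂ) := by push_cast; ring
      have := tendsto_punctured_sub (χ : ℂ) ((α + χ : ℝ) : ℂ)
      rwa [e] at this
    exact (h2.comp tminus').congr fun z => congrArg D (by ring)
  · intro h
    have h1 : Tendsto (fun w : ℂ => D (w + (χ : ℂ))) (𝓝[≠] (α : ℂ)) (𝓝 0) := h.comp tplus
    have hmul : Tendsto (fun w : ℂ => Ycl P n χ w * D (w + (χ : ℂ))) (𝓝[≠] (α : ℂ))
        (𝓝 0) := by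
      have := hYt.mul h1
      simpa using this
    have h2 : Tendsto (fun w : ℂ => D (w - (χ : ℂ))) (𝓝[≠] (α : ℂ)) (𝓝 0) := by
      refine hmul.congr' ?_
      filter_upwards [hevid] with w hw
      rw [sub_eq_zero] at hw
      exact hw.symm
    have tplus' : Tendsto (fun w : ℂ => w + (χ : ℂ)) (𝓝[≠] ((α - χ : ℝ) : ℂ))
        (𝓝[≠] (α : ℂ)) := by
      have e : ((α - χ : ℝ) : ℂ) + (χ : ℂ) = (α : ℂ) := by push_cast; ring
      have := tendsto_punctured_add (χ : ℂ) ((α - χ : ℝ) : ℂ)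
      rwa [e] at this
    exact (h2.comp tplus').congr fun z => congrArg D (by ring)

theorem aux_unique {γ : ℝ} (hγ0 : 0 < γ) (hγ2 : γ < 2) (hirr : Irrational (γ ^ 2))
    (V : Set ℂ) (hVconn : IsPreconnected V)
    (hVsub : ∀ t : ℝ, -4 / γ < t → t < 2 * (γ / 2 + 2 / γ) → (t : ℂ) ∈ V)
    (D : ℂ → ℂ) (hD : ∀ z ∈ V, MeromorphicAt D z)
    (hstep : ∀ χ : ℝ, (χ = γ / 2 ∨ χ = 2 / γ) → ∀ α : ℝ,
      -4 / γ + χ < α → α < 2 * (γ / 2 + 2 / γ) - χ →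
      (Tendsto D (𝓝[≠] ((α - χ : ℝ) : ℂ)) (𝓝 0) ↔
       Tendsto D (𝓝[≠] ((α + χ : ℝ) : ℂ)) (𝓝 0)))
    (α₀ : ℝ) (h₀1 : -2 / γ < α₀) (h₀2 : α₀ < γ + 2 / γ)
    (hZs0 : Tendsto D (𝓝[≠] ((α₀ : ℝ) : ℂ)) (𝓝 0)) :
    ∀ z ∈ V, ∀ᶠ w in 𝓝[≠] z, D w = 0 := by
  have hb : (0 : ℝ) < 4 / γ := by positivity
  have h2γ : (0 : ℝ) < 2 / γ := by positivity
  have h24 : (4 : ℝ) / γ = 2 * (2 / γ) := by ring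
  have hQexp : 2 * (γ / 2 + 2 / γ) = γ + 4 / γ := by ring
  have hm4 : -4 / γ = -(4 / γ) := by ring
  -- the two elementary steps
  have hstep_a : ∀ u : ℝ, -(4 / γ) < u → u < 4 / γ →
      (Tendsto D (𝓝[≠] ((u : ℝ) : ℂ)) (𝓝 0) ↔
       Tendsto D (𝓝[≠] ((u + γ : ℝ) : ℂ)) (𝓝 0)) := by
    intro u h1 h2
    have := hstep (γ / 2) (Or.inl rfl) (u + γ / 2) (by rw [hm4]; linarith)
      (by rw [hQexp]; linarith)
    rwa [show u + γ / 2 - γ / 2 = u from by ring,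
      show u + γ / 2 + γ / 2 = u + γ from by ring] at this
  have hstep_b : ∀ u : ℝ, -(4 / γ) < u → u < γ →
      (Tendsto D (𝓝[≠] ((u : ℝ) : ℂ)) (𝓝 0) ↔
       Tendsto D (𝓝[≠] ((u + 4 / γ : ℝ) : ℂ)) (𝓝 0)) := by
    intro u h1 h2
    have := hstep (2 / γ) (Or.inr rfl) (u + 2 / γ) (by rw [hm4]; linarith)
      (by rw [hQexp]; linarith)
    rwa [show u + 2 / γ - 2 / γ = u from by ring,
      show u + 2 / γ + 2 / γ = u + 4 / γ from by ring] at this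
  set Zs : ℝ → Prop := fun t => Tendsto D (𝓝[≠] ((t : ℝ) : ℂ)) (𝓝 0) with hZsdef
  have hstep_a' : ∀ u : ℝ, -(4 / γ) < u → u < 4 / γ → (Zs u ↔ Zs (u + γ)) := hstep_a
  -- Phase 1: reach [0, γ)
  have toIco : ∀ v : ℝ, -(4 / γ) < v → v < γ + 4 / γ → Zs v →
      ∃ u : ℝ, 0 ≤ u ∧ u < γ ∧ Zs u := by
    intro v hv1 hv2 hZv
    by_cases h0 : 0 ≤ v
    · obtain ⟨k, hk⟩ := exists_nat_gt (v / γ)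
      have hvk : v < ((k : ℝ) + 1) * γ := by
        rw [div_lt_iff₀ hγ0] at hk
        nlinarith
      obtain ⟨j, hj0, hj1, hjZ⟩ := down_lemma hγ0 hb Zs hstep_a' k v h0 hv2 hvk hZv
      exact ⟨v - j * γ, hj0, hj1, hjZ⟩
    · push_neg at h0
      obtain ⟨k, hk⟩ := exists_nat_gt (-v / γ)
      have hvk : -(k : ℝ) * γ ≤ v := by
        rw [div_lt_iff₀ hγ0] at hk
        nlinarith
      exact up_lemma hγ0 hb Zs hstep_a' k v hv1 (by linarith) hvk hZv
  obtain ⟨u₁, hu₁0, hu₁γ, hu₁Z⟩ := toIco α₀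
    (by have e2 : (-2 : ℝ) / γ = -(2 / γ) := by ring
        rw [e2] at h₀1; linarith)
    (by linarith) hZs0
  -- Phase 2: the orbit of the irrational rotation
  have orbit : ∀ m : ℕ, ∃ K : ℕ, 0 ≤ u₁ + m * (4 / γ) - K * γ ∧
      u₁ + m * (4 / γ) - K * γ < γ ∧ Zs (u₁ + m * (4 / γ) - K * γ) := by
    intro m
    induction m with
    | zero =>
      refine ⟨0, ?_, ?_, ?_⟩
      · rw [show u₁ + (↑(0 : ℕ) : ℝ) * (4 / γ) - (↑(0 : ℕ) : ℝ) * γ = u₁ from by push_cast; ring]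
        exact hu₁0
      · rw [show u₁ + (↑(0 : ℕ) : ℝ) * (4 / γ) - (↑(0 : ℕ) : ℝ) * γ = u₁ from by push_cast; ring]
        exact hu₁γ
      · rw [show u₁ + (↑(0 : ℕ) : ℝ) * (4 / γ) - (↑(0 : ℕ) : ℝ) * γ = u₁ from by push_cast; ring]
        exact hu₁Z
    | succ m ih =>
      obtain ⟨K, h0, h1, hZ⟩ := ih
      set u : ℝ := u₁ + m * (4 / γ) - K * γ with hudef
      clear_value u
      have hZu' : Zs (u + 4 / γ) := (hstep_b u (by linarith) h1).1 hZ
      obtain ⟨k, hk⟩ := exists_nat_gt ((u + 4 / γ) / γ)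
      have hlt : u + 4 / γ < ((k : ℝ) + 1) * γ := by
        rw [div_lt_iff₀ hγ0] at hk
        nlinarith
      obtain ⟨j, hj0, hj1, hjZ⟩ := down_lemma hγ0 hb Zs hstep_a' k (u + 4 / γ)
        (by linarith) (by linarith) hlt hZu'
      refine ⟨K + j, ?_, ?_, ?_⟩
      · rw [show u₁ + (↑(m + 1) : ℝ) * (4 / γ) - (↑(K + j) : ℝ) * γ =
          u + 4 / γ - (j : ℝ) * γ from by rw [hudef]; push_cast; ring]
        exact hj0
      · rw [show u₁ + (↑(m + 1) : ℝ) * (4 / γ) - (↑(K + j) : ℝ) * γ =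
          u + 4 / γ - (j : ℝ) * γ from by rw [hudef]; push_cast; ring]
        exact hj1
      · rw [show u₁ + (↑(m + 1) : ℝ) * (4 / γ) - (↑(K + j) : ℝ) * γ =
          u + 4 / γ - (j : ℝ) * γ from by rw [hudef]; push_cast; ring]
        exact hjZ
  choose K hK0 hK1 hKZ using orbit
  set U : ℕ → ℝ := fun m => u₁ + m * (4 / γ) - K m * γ with hUdef
  have hUinj : Function.Injective U := by
    intro m m' hmm
    by_contra hne
    have heq : ((m : ℝ) - m') * (4 / γ) = ((K m : ℝ) - K m') * γ := by
      have : u₁ + m * (4 / γ) - K m * γ = u₁ + m' * (4 / γ) - K m' * γ := hmm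
      linarith [this]
    have hp : ((m : ℤ) - m') ≠ 0 := by
      intro h
      apply hne
      have : (m : ℤ) = m' := by linarith [sub_eq_zero.mp h]
      exact_mod_cast this
    have hq : ((K m : ℤ) - K m') ≠ 0 := by
      intro h
      have hq0 : ((K m : ℝ) - K m') = 0 := by exact_mod_cast h
      rw [hq0, zero_mul] at heq
      have hp0 : ((m : ℝ) - m') = 0 := by
        by_contra hp0
        exact (mul_ne_zero hp0 (by positivity : (4:ℝ)/γ ≠ 0)) heq
      apply hp
      exact_mod_cast hp0
    -- γ² = 4(m−m')/(Km−Km') is rational: contradiction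
    apply hirr
    refine ⟨(4 * ((m : ℤ) - m') : ℚ) / (((K m : ℤ) - K m') : ℚ), ?_⟩
    have hγne : γ ≠ 0 := hγ0.ne'
    have hqR : ((K m : ℝ) - K m') ≠ 0 := by
      intro h
      apply hq
      have : ((((K m : ℤ) - K m') : ℤ) : ℝ) = 0 := by push_cast; linarith
      exact_mod_cast this
    have hkey : 4 * ((m : ℝ) - m') = (((K m : ℝ) - K m')) * γ ^ 2 := by
      have := heq
      field_simp at this
      nlinarith [this]
    push_cast
    rw [div_eq_iff hqR]
    linarith [hkey]
  have hUmem : ∀ m : ℕ, U m ∈ Set.Icc (0 : ℝ) γ := fun m => ⟨hK0 m, (hK1 m).le⟩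
  have hUZ : ∀ m : ℕ, Zs (U m) := fun m => hKZ m
  -- Bolzano–Weierstrass
  obtain ⟨x, hxmem, φ, hφmono, hφtend⟩ :=
    tendsto_subseq_of_bounded (Metric.isBounded_Icc (0 : ℝ) γ) hUmem
  rw [IsClosed.closure_eq isClosed_Icc] at hxmem
  have hxV : ((x : ℝ) : ℂ) ∈ V := hVsub x (by linarith [hxmem.1]) (by rw [hQexp]; linarith [hxmem.2])
  -- h-trick at x
  obtain ⟨N, hN⟩ := hD _ hxV
  set h : ℂ → ℂ := fun z => (z - ((x : ℝ) : ℂ)) ^ N • D z with hhdef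
  have hUφinj : Function.Injective (U ∘ φ) := hUinj.comp hφmono.injective
  have hseqC : Tendsto (fun m : ℕ => ((U (φ m) : ℝ) : ℂ)) atTop (𝓝[≠] ((x : ℝ) : ℂ)) := by
    apply tendsto_nhdsWithin_of_tendsto_nhds_of_eventually_within
    · exact (Complex.continuous_ofReal.tendsto x).comp hφtend
    · have hne : ∀ᶠ m in atTop, U (φ m) ≠ x := by
        rcases em (∃ m₀, U (φ m₀) = x) with ⟨m₀, hm₀⟩ | hno
        · filter_upwards [eventually_gt_atTop m₀] with m hm hmx
          exact hm.ne' (hUφinj (hmx.trans hm₀.symm))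
        · exact Eventually.of_forall fun m hx' => hno ⟨m, hx'⟩
      filter_upwards [hne] with m hm
      simp only [Set.mem_compl_iff, Set.mem_singleton_iff]
      exact fun hc => hm (Complex.ofReal_inj.mp hc)
  have hzero : ∀ᶠ m in atTop, h ((U (φ m) : ℝ) : ℂ) = 0 := by
    have hAA : ∀ᶠ m in atTop, AnalyticAt ℂ h ((U (φ m) : ℝ) : ℂ) :=
      (hseqC.mono_right nhdsWithin_le_nhds).eventually hN.eventually_analyticAt
    filter_upwards [hAA] with m hm
    set p : ℂ := ((U (φ m) : ℝ) : ℂ) with hpdef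
    have hZsm : Tendsto D (𝓝[≠] p) (𝓝 0) := hUZ (φ m)
    have hpow : Tendsto (fun z : ℂ => (z - ((x : ℝ) : ℂ)) ^ N) (𝓝[≠] p)
        (𝓝 ((p - ((x : ℝ) : ℂ)) ^ N)) :=
      (((continuous_sub_right _).pow N).tendsto p).mono_left nhdsWithin_le_nhds
    have ht1 : Tendsto h (𝓝[≠] p) (𝓝 0) := by
      have := hpow.smul hZsm
      simpa [hhdef] using this
    have ht2 : Tendsto h (𝓝[≠] p) (𝓝 (h p)) := hm.continuousAt.continuousWithinAt
    exact tendsto_nhds_unique ht2 ht1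
  have hfreqx : ∃ᶠ z in 𝓝[≠] ((x : ℝ) : ℂ), h z = 0 := hseqC.frequently hzero.frequently
  have hev0 : ∀ᶠ z in 𝓝 ((x : ℝ) : ℂ), h z = 0 :=
    hN.frequently_zero_iff_eventually_zero.1 hfreqx
  have hxO : ∀ᶠ w in 𝓝[≠] ((x : ℝ) : ℂ), D w = 0 := by
    filter_upwards [hev0.filter_mono nhdsWithin_le_nhds, self_mem_nhdsWithin] with w h1 h2
    have hwx : w ≠ ((x : ℝ) : ℂ) := h2
    have hpow : (w - ((x : ℝ) : ℂ)) ^ N ≠ 0 := pow_ne_zero _ (sub_ne_zero_of_ne hwx)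
    have h1' : (w - ((x : ℝ) : ℂ)) ^ N • D w = 0 := h1
    simpa [smul_eq_zero, hpow] using h1'
  -- Globalization via preconnectedness
  set O : Set ℂ := {z : ℂ | ∀ᶠ w in 𝓝[≠] z, D w = 0} with hOdef
  set O' : Set ℂ := {z : ℂ | ∀ᶠ w in 𝓝[≠] z, D w ≠ 0} with hO'def
  have hOopen : IsOpen O := isOpen_eventually_punctured _
  have hO'open : IsOpen O' := isOpen_eventually_punctured _
  have hcover : V ⊆ O ∪ O' := by
    intro z hz
    obtain ⟨M, hM⟩ := hD z hz
    rcases hM.eventually_eq_zero_or_eventually_ne_zero with hcase | hcase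
    · left
      show ∀ᶠ w in 𝓝[≠] z, D w = 0
      filter_upwards [hcase.filter_mono nhdsWithin_le_nhds, self_mem_nhdsWithin] with w h1 h2
      have hwz : w ≠ z := h2
      have hpow : (w - z) ^ M ≠ 0 := pow_ne_zero _ (sub_ne_zero_of_ne hwz)
      simpa [smul_eq_zero, hpow] using h1
    · right
      show ∀ᶠ w in 𝓝[≠] z, D w ≠ 0
      filter_upwards [hcase] with w h1 h0
      exact h1 (by simp [h0])
  intro z hz
  by_contra hzO
  have hzO' : z ∈ O' := (hcover hz).resolve_left hzO
  obtain ⟨w₀, hwV, hwO, hwO'⟩ := hVconn O O' hOopen hO'open hcover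
    ⟨((x : ℝ) : ℂ), hxV, hxO⟩ ⟨z, hz, hzO'⟩
  have hA : ∀ᶠ v in 𝓝[≠] w₀, D v = 0 := hwO
  have hB : ∀ᶠ v in 𝓝[≠] w₀, D v ≠ 0 := hwO'
  obtain ⟨v, hv1, hv2⟩ := (hA.and hB).exists
  exact hv2 hv1


/-- Proposition 7.2 (prop:shift-unique): two meromorphic solutions of the pair of shift
equations with shifts `2χ`, `χ ∈ {γ/2, 2/γ}`, that agree at one point of
`(−2/γ, γ + 2/γ)` agree wherever both are analytic, provided `γ²` is irrational. -/
theorem shift_equations_unique {γ : ℝ} (hγ : γ ∈ Set.Ioo (0 : ℝ) 2)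
    (hirr : Irrational (γ ^ 2)) {P : ℝ} (hP : P ≠ 0) {n : ℕ} (hn : 1 ≤ n)
    (V : Set ℂ) (hVopen : IsOpen V) (hVconn : IsConnected V)
    (hVsub : (fun t : ℝ => (t : ℂ)) '' Set.Ioo (-4 / γ) (2 * (γ / 2 + 2 / γ)) ⊆ V)
    (Z : ℝ → ℝ → ℂ) (X₁ X₂ : ℂ → ℂ)
    (hX₁ : MeromorphicOn X₁ V) (hX₂ : MeromorphicOn X₂ V)
    (hshift₁ : ∀ χ ∈ ({γ / 2, 2 / γ} : Set ℝ), ∀ α : ℝ,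
      α ∈ Set.Ioo (-4 / γ + χ) (2 * (γ / 2 + 2 / γ) - χ) →
      AnalyticAt ℂ X₁ ((α - χ : ℝ) : ℂ) → AnalyticAt ℂ X₁ ((α + χ : ℝ) : ℂ) →
      X₁ ((α - χ : ℝ) : ℂ) = Yshift P n χ α * X₁ ((α + χ : ℝ) : ℂ) + Z χ α)
    (hshift₂ : ∀ χ ∈ ({γ / 2, 2 / γ} : Set ℝ), ∀ α : ℝ,
      α ∈ Set.Ioo (-4 / γ + χ) (2 * (γ / 2 + 2 / γ) - χ) →
      AnalyticAt ℂ X₂ ((α - χ : ℝ) : ℂ) → AnalyticAt ℂ X₂ ((α + χ : ℝ) : ℂ) →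
      X₂ ((α - χ : ℝ) : ℂ) = Yshift P n χ α * X₂ ((α + χ : ℝ) : ℂ) + Z χ α)
    (α₀ : ℝ) (hα₀ : α₀ ∈ Set.Ioo (-2 / γ) (γ + 2 / γ))
    (hX₁α₀ : AnalyticAt ℂ X₁ ((α₀ : ℝ) : ℂ)) (hX₂α₀ : AnalyticAt ℂ X₂ ((α₀ : ℝ) : ℂ))
    (heq : X₁ ((α₀ : ℝ) : ℂ) = X₂ ((α₀ : ℝ) : ℂ)) :
    ∀ α ∈ V, AnalyticAt ℂ X₁ α → AnalyticAt ℂ X₂ α → X₁ α = X₂ α := by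
  have hγ0 : 0 < γ := hγ.1
  have hγ2 : γ < 2 := hγ.2
  have hVsub' : ∀ t : ℝ, -4 / γ < t → t < 2 * (γ / 2 + 2 / γ) → (t : ℂ) ∈ V :=
    fun t h1 h2 => hVsub ⟨t, ⟨h1, h2⟩, rfl⟩
  have hD : ∀ z ∈ V, MeromorphicAt (fun z => X₁ z - X₂ z) z :=
    fun z hz => (hX₁ z hz).sub (hX₂ z hz)
  have hstep : ∀ χ : ℝ, (χ = γ / 2 ∨ χ = 2 / γ) → ∀ α : ℝ,
      -4 / γ + χ < α → α < 2 * (γ / 2 + 2 / γ) - χ →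
      (Tendsto (fun z => X₁ z - X₂ z) (𝓝[≠] ((α - χ : ℝ) : ℂ)) (𝓝 0) ↔
       Tendsto (fun z => X₁ z - X₂ z) (𝓝[≠] ((α + χ : ℝ) : ℂ)) (𝓝 0)) := by
    intro χ hmem α h1 h2
    have hχpos : 0 < χ := by rcases hmem with h | h <;> (subst h; positivity)
    have hχmem : χ ∈ ({γ / 2, 2 / γ} : Set ℝ) := by rcases hmem with h | h <;> simp [h]
    exact step_iff hP V hVsub' Z X₁ X₂ hX₁ hX₂ hshift₁ hshift₂ hχmem hχpos h1 h2
  have hZs0 : Tendsto (fun z => X₁ z - X₂ z) (𝓝[≠] ((α₀ : ℝ) : ℂ)) (𝓝 0) := by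
    have ht : Tendsto (fun z => X₁ z - X₂ z) (𝓝 ((α₀ : ℝ) : ℂ))
        (𝓝 (X₁ ((α₀ : ℝ) : ℂ) - X₂ ((α₀ : ℝ) : ℂ))) :=
      hX₁α₀.continuousAt.sub hX₂α₀.continuousAt
    rw [heq, sub_self] at ht
    exact ht.mono_left nhdsWithin_le_nhds
  have key := aux_unique hγ0 hγ2 hirr V hVconn.isPreconnected hVsub'
    (fun z => X₁ z - X₂ z) hD hstep α₀ hα₀.1 hα₀.2 hZs0
  intro α hα hA1 hA2
  have hev := key α hα
  have h1 : Tendsto (fun z => X₁ z - X₂ z) (𝓝[≠] α) (𝓝 (X₁ α - X₂ α)) :=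
    (hA1.continuousAt.sub hA2.continuousAt).continuousWithinAt
  have h2 : Tendsto (fun z => X₁ z - X₂ z) (𝓝[≠] α) (𝓝 0) := by
    refine Filter.Tendsto.congr' ?_ tendsto_const_nhds
    exact hev.mono fun w hw => hw.symm
  exact sub_eq_zero.mp (tendsto_nhds_unique h1 h2)
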